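/- Let k be a field and consider the formal power series ring R = k[[w₁,…,w_{n-1}, t]] with the derivation D = ∂/∂t. Suppose g ∈ R satisfies D(g) = h·g for some h ∈ R. Then there exists a unit u ∈ R (with constant term 1 when evaluated appropriately, assuming k has characteristic 0) such that g = u · g₀, where g₀ ∈ k[[w₁,…,w_{n-1}]] is obtained from g by setting t = 0. -/

import Mathlib

noncomputable section FlowBoxAux

open PowerSeries

variable {S : Type*} [CommRing S] [Algebra ℚ S]

/-- Coefficients of the solution of `u' = h u`, `u 0 = 1`. -/
private def ucoef (h : PowerSeries S) : ℕ → S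
  | 0 => 1
  | (k + 1) => ((k : ℚ) + 1)⁻¹ •
      ∑ i ∈ Finset.range (k + 1), PowerSeries.coeff (R := S) i h * ucoef h (k - i)
  decreasing_by omega

private def usol (h : PowerSeries S) : PowerSeries S := PowerSeries.mk (ucoef h)

private lemma natcast_eq (k : ℕ) : algebraMap ℚ S ((k : ℚ) + 1) = ((k : S) + 1) := by
  push_cast
  simp

private lemma usol_const (h : PowerSeries S) : constantCoeff (R := S) (usol h) = 1 := by
  have : constantCoeff (R := S) (usol h) = PowerSeries.coeff (R := S) 0 (usol h) := by
    rw [PowerSeries.coeff_zero_eq_constantCoeff]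
  rw [this, usol, PowerSeries.coeff_mk, ucoef]

private lemma usol_deriv (h : PowerSeries S) :
    PowerSeries.derivative S (usol h) = h * usol h := by
  ext k
  rw [PowerSeries.coeff_derivative, PowerSeries.coeff_mul,
    Finset.Nat.sum_antidiagonal_eq_sum_range_succ_mk]
  simp only [usol, PowerSeries.coeff_mk]
  show ucoef h (k + 1) * ((k : S) + 1) = _
  rw [ucoef, smul_mul_assoc, mul_comm, ← natcast_eq (S := S), ← Algebra.smul_def, smul_smul,
    inv_mul_cancel₀ (by positivity : ((k : ℚ) + 1) ≠ 0), one_smul]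

/-- Uniqueness for the linear ODE with zero initial condition. -/
private lemma ode_zero (h f : PowerSeries S)
    (hf : PowerSeries.derivative S f = h * f) (h0 : constantCoeff (R := S) f = 0) : f = 0 := by
  have key : ∀ k, PowerSeries.coeff (R := S) k f = 0 := by
    intro k
    induction k using Nat.strong_induction_on with
    | _ k ih =>
      match k with
      | 0 => rwa [PowerSeries.coeff_zero_eq_constantCoeff]
      | (k + 1) =>
        have h1 : PowerSeries.coeff (R := S) k (PowerSeries.derivative S f)
            = PowerSeries.coeff (R := S) k (h * f) := by rw [hf]
        rw [PowerSeries.coeff_derivative, PowerSeries.coeff_mul,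
          Finset.Nat.sum_antidiagonal_eq_sum_range_succ_mk] at h1
        have h2 : ∑ i ∈ Finset.range (k + 1),
            PowerSeries.coeff (R := S) i h * PowerSeries.coeff (R := S) (k - i) f = 0 := by
          apply Finset.sum_eq_zero
          intro i hi
          rw [ih (k - i) (by omega), mul_zero]
        rw [h2] at h1
        have h3 : PowerSeries.coeff (R := S) (k + 1) f * ((k : S) + 1)
            * algebraMap ℚ S ((k : ℚ) + 1)⁻¹ = 0 := by rw [h1, zero_mul]
        rwa [← natcast_eq (S := S), mul_assoc, ← map_mul,
          mul_inv_cancel₀ (by positivity : ((k : ℚ) + 1) ≠ 0), map_one, mul_one] at h3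
  ext k
  rw [key k, map_zero]

end FlowBoxAux

/-- Formal flow-box factorization: in `k[[w₁,…,w_{n-1}]][[t]]` with `D = ∂/∂t`,
if `D g = h · g` then `g = u · g₀` for a unit `u` with constant term `1`,
where `g₀ = g|_{t=0}`. -/
theorem formal_flow_box_factorization {K : Type*} [Field K] [CharZero K] (n : ℕ)
    (g h : PowerSeries (MvPowerSeries (Fin (n - 1)) K))
    (hg : PowerSeries.derivative (MvPowerSeries (Fin (n - 1)) K) g = h * g) :
    ∃ u : (PowerSeries (MvPowerSeries (Fin (n - 1)) K))ˣ,
      (PowerSeries.constantCoeff (R := MvPowerSeries (Fin (n - 1)) K)) (↑u) = 1 ∧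
      g = ↑u * (PowerSeries.C (R := MvPowerSeries (Fin (n - 1)) K))
            ((PowerSeries.constantCoeff (R := MvPowerSeries (Fin (n - 1)) K)) g) := by
  let S := MvPowerSeries (Fin (n - 1)) K
  let U : PowerSeries S := usol h
  have hUc : PowerSeries.constantCoeff (R := S) U = 1 := usol_const h
  have hUd : PowerSeries.derivative S U = h * U := usol_deriv h
  have hunit : IsUnit U := by
    rw [PowerSeries.isUnit_iff_constantCoeff, hUc]; exact isUnit_one
  obtain ⟨u, hu⟩ := hunit
  set g₀ := PowerSeries.constantCoeff (R := S) g
  have hdiff : g - U * PowerSeries.C (R := S) g₀ = 0 := by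
    apply ode_zero h
    · rw [map_sub, hg, Derivation.leibniz, PowerSeries.derivative_C, smul_zero, zero_add,
        smul_eq_mul, hUd]
      ring
    · simp [g₀, hUc]
  refine ⟨u, by rw [hu, hUc], ?_⟩
  rw [hu]
  have := sub_eq_zero.mp hdiff
  exact this.symm ▸ rfl
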